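/- The family {R^{(n,m)}} satisfies the second hexagon relation (id_n ⊗ φ_{m,l})(R^{(n,ml)}) = R^{(n,l)}_{13} R^{(n,m)}_{12} in M_n(ℂ) ⊗ M_m(ℂ) ⊗ M_l(ℂ), for all positive integers n, m, l. -/

import Mathlib

/-- The index map `(i,j) ↦ m·i + j : Fin n × Fin m → Fin (n*m)` (0-based form of
`(i,j) ↦ m(i-1)+j`); its inverse is `k ↦ (k div m, k mod m)`. -/
def pairIdx {n m : ℕ} (i : Fin n) (j : Fin m) : Fin (n * m) :=
  ⟨m * (i : ℕ) + (j : ℕ), by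
    have hi : (i : ℕ) + 1 ≤ n := i.2
    have hj : (j : ℕ) < m := j.2
    have h1 : m * (i : ℕ) + (j : ℕ) < m * ((i : ℕ) + 1) := by
      rw [Nat.mul_succ]; omega
    have h2 : m * ((i : ℕ) + 1) ≤ m * n := Nat.mul_le_mul le_rfl hi
    have h3 : m * n = n * m := Nat.mul_comm m n
    omega⟩


/-- `φ : M_{nm}(ℂ) → M_n(ℂ) ⊗ M_m(ℂ)` (Kronecker model `Matrix (Fin n × Fin m)`)
is the matrix-unit isomorphism `φ_{n,m}` iff
`φ(E^{(nm)}_{m(i-1)+j, m(i'-1)+j'}) = E^{(n)}_{i,i'} ⊗ E^{(m)}_{j,j'}`. -/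
def IsMatrixUnitHom (n m : ℕ)
    (φ : Matrix (Fin (n * m)) (Fin (n * m)) ℂ →⋆ₐ[ℂ]
      Matrix (Fin n × Fin m) (Fin n × Fin m) ℂ) : Prop :=
  ∀ (i i' : Fin n) (j j' : Fin m),
    φ (Matrix.single (pairIdx i j) (pairIdx i' j') 1) =
      Matrix.single (i, j) (i', j') 1

lemma pairIdx_eq_equiv {m l : ℕ} (p : Fin m × Fin l) :
    pairIdx p.1 p.2 = finProdFinEquiv p := by
  apply Fin.ext
  simp [pairIdx, finProdFinEquiv, Nat.add_comm]

lemma phi_apply {m l : ℕ}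
    (φ : Matrix (Fin (m * l)) (Fin (m * l)) ℂ →⋆ₐ[ℂ]
      Matrix (Fin m × Fin l) (Fin m × Fin l) ℂ)
    (h : IsMatrixUnitHom m l φ)
    (A : Matrix (Fin (m * l)) (Fin (m * l)) ℂ) (a b : Fin m × Fin l) :
    φ A a b = A (pairIdx a.1 a.2) (pairIdx b.1 b.2) := by
  set e := finProdFinEquiv (m := m) (n := l) with he
  have hA : A = ∑ p : (Fin m × Fin l) × (Fin m × Fin l),
      A (e p.1) (e p.2) • Matrix.single (e p.1) (e p.2) (1 : ℂ) := by
    have h1 : ∑ p : (Fin m × Fin l) × (Fin m × Fin l),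
        A (e p.1) (e p.2) • Matrix.single (e p.1) (e p.2) (1 : ℂ)
        = ∑ z : Fin (m * l) × Fin (m * l),
            A z.1 z.2 • Matrix.single z.1 z.2 (1 : ℂ) :=
      Fintype.sum_equiv (e.prodCongr e) _ _ (fun p => rfl)
    rw [h1, Fintype.sum_prod_type]
    conv_lhs => rw [Matrix.matrix_eq_sum_single A]
    refine Finset.sum_congr rfl fun x _ => Finset.sum_congr rfl fun y _ => ?_
    rw [Matrix.smul_single, smul_eq_mul, mul_one]
  conv_lhs => rw [hA, map_sum]
  have key2 : ∀ p q : Fin m × Fin l,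
      φ (Matrix.single (e p) (e q) (1:ℂ))
        = Matrix.single p q (1 : ℂ) := by
    intro p q
    have h1 := pairIdx_eq_equiv (l := l) p
    have h2 := pairIdx_eq_equiv (l := l) q
    have := h p.1 q.1 p.2 q.2
    rw [h1, h2] at this
    simpa using this
  simp_rw [map_smul, key2]
  simp only [Matrix.sum_apply, Matrix.smul_apply, Matrix.single,
    Matrix.of_apply, smul_eq_mul, mul_ite, mul_one, mul_zero]
  rw [Fintype.sum_eq_single ((a, b) : (Fin m × Fin l) × (Fin m × Fin l))]
  · rw [pairIdx_eq_equiv a, pairIdx_eq_equiv b, ← he]; simp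
  · intro x hx
    rw [if_neg]
    rintro ⟨h1', h2'⟩
    exact hx (Prod.ext h1' h2')

/-- The permutation unitary `R^{(n,m)} ∈ M_n(ℂ) ⊗ M_m(ℂ)` (Kronecker model):
`R^{(n,m)} e_i ⊗ e_j = e_{i'} ⊗ e_{j'}` where `m·i + j = n·j' + i'` (0-based),
i.e. the `(p,q)` entry is `1` iff `p = σ_{n,m}(q)`. -/
def Rmat (n m : ℕ) : Matrix (Fin n × Fin m) (Fin n × Fin m) ℂ :=
  fun p q => if m * (q.1 : ℕ) + (q.2 : ℕ) = n * (p.2 : ℕ) + (p.1 : ℕ) then 1 else 0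

/-- `id_α ⊗ φ` in the Kronecker model. -/
def idTensor {α β γ : Type*} (φ : Matrix β β ℂ → Matrix γ γ ℂ)
    (M : Matrix (α × β) (α × β) ℂ) : Matrix (α × γ) (α × γ) ℂ :=
  fun p q => φ (fun b b' => M (p.1, b) (q.1, b')) p.2 q.2

/-- The leg `R^{(n,l)}_{13}` in `M_n ⊗ M_m ⊗ M_l` (Kronecker model,
indices `Fin n × (Fin m × Fin l)`). -/
def R13' (n m l : ℕ) : Matrix (Fin n × Fin m × Fin l) (Fin n × Fin m × Fin l) ℂ :=
  fun p q => Rmat n l (p.1, p.2.2) (q.1, q.2.2) * (if p.2.1 = q.2.1 then 1 else 0)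

/-- The leg `R^{(n,m)}_{12}` in `M_n ⊗ M_m ⊗ M_l`. -/
def R12' (n m l : ℕ) : Matrix (Fin n × Fin m × Fin l) (Fin n × Fin m × Fin l) ℂ :=
  fun p q => Rmat n m (p.1, p.2.1) (q.1, q.2.1) * (if p.2.2 = q.2.2 then 1 else 0)

/-- The second hexagon relation
`(id_n ⊗ φ_{m,l})(R^{(n,ml)}) = R^{(n,l)}_{13} R^{(n,m)}_{12}`
in `M_n(ℂ) ⊗ M_m(ℂ) ⊗ M_l(ℂ)` (Kronecker model). -/
theorem Rmat_hexagon_two (n m l : ℕ) (hn : 0 < n) (hm : 0 < m) (hl : 0 < l)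
    (φml : Matrix (Fin (m * l)) (Fin (m * l)) ℂ →⋆ₐ[ℂ]
      Matrix (Fin m × Fin l) (Fin m × Fin l) ℂ)
    (hφml : IsMatrixUnitHom m l φml) :
    idTensor (⇑φml) (Rmat n (m * l)) = R13' n m l * R12' n m l := by
  ext ⟨a, j, k⟩ ⟨a', j', k'⟩
  show φml (fun b b' => Rmat n (m * l) (a, b) (a', b')) (j, k) (j', k') = _
  refine (phi_apply φml hφml _ (j, k) (j', k')).trans ?_
  rw [Matrix.mul_apply]
  simp only [R13', R12', Rmat, Fintype.sum_prod_type, pairIdx,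
    mul_ite, ite_mul, one_mul, mul_one, mul_zero, zero_mul]
  have step : ∀ b : Fin n,
      (∑ c : Fin m, ∑ d : Fin l,
        (if d = k' then
          if m * (a' : ℕ) + (j' : ℕ) = n * (c : ℕ) + (b : ℕ) then
            if j = c then
              if l * (b : ℕ) + (d : ℕ) = n * (k : ℕ) + (a : ℕ) then (1 : ℂ) else 0
            else 0
          else 0
        else 0))
      = if (l * (b : ℕ) + (k' : ℕ) = n * (k : ℕ) + (a : ℕ) ∧
            m * (a' : ℕ) + (j' : ℕ) = n * (j : ℕ) + (b : ℕ)) then (1 : ℂ) else 0 := by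
    intro b
    have hd : ∀ c : Fin m, (∑ d : Fin l,
        (if d = k' then
          if m * (a' : ℕ) + (j' : ℕ) = n * (c : ℕ) + (b : ℕ) then
            if j = c then
              if l * (b : ℕ) + (d : ℕ) = n * (k : ℕ) + (a : ℕ) then (1 : ℂ) else 0
            else 0
          else 0
        else 0))
        = (if m * (a' : ℕ) + (j' : ℕ) = n * (c : ℕ) + (b : ℕ) then
            if j = c then
              if l * (b : ℕ) + (k' : ℕ) = n * (k : ℕ) + (a : ℕ) then (1 : ℂ) else 0
            else 0
          else 0) := by
      intro c
      rw [Finset.sum_ite_eq' Finset.univ k']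
      simp
    simp_rw [hd]
    rw [Finset.sum_eq_single j]
    · split_ifs <;> simp_all
    · intro c _ hc
      simp [Ne.symm hc]
    · simp
  simp_rw [step]
  by_cases hC : m * l * (a' : ℕ) + (l * (j' : ℕ) + (k' : ℕ))
      = n * (l * (j : ℕ) + (k : ℕ)) + (a : ℕ)
  · -- condition holds: the sum has exactly one nonzero term
    have hge : n * (j : ℕ) ≤ m * (a' : ℕ) + (j' : ℕ) := by
      by_contra hlt
      push_neg at hlt
      have h2 : l * (m * (a' : ℕ) + (j' : ℕ) + 1) ≤ l * (n * (j : ℕ)) :=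
        Nat.mul_le_mul_left l hlt
      have hk : (k' : ℕ) < l := k'.2
      nlinarith [hC, h2, hk, Nat.zero_le (n * (k : ℕ)), Nat.zero_le (a : ℕ)]
    set B : ℕ := m * (a' : ℕ) + (j' : ℕ) - n * (j : ℕ) with hBdef
    have hBeq : m * (a' : ℕ) + (j' : ℕ) = n * (j : ℕ) + B := by omega
    have h5 : l * B + (k' : ℕ) = n * (k : ℕ) + (a : ℕ) := by
      have h6 : l * (m * (a' : ℕ) + (j' : ℕ)) = l * (n * (j : ℕ)) + l * B := by
        rw [hBeq]; ring
      nlinarith [hC, h6]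
    have hBlt : B < n := by
      have h7 : n * (k : ℕ) + n ≤ n * l := by
        have h8 : (k : ℕ) + 1 ≤ l := k.2
        calc n * (k : ℕ) + n = n * ((k : ℕ) + 1) := by ring
        _ ≤ n * l := Nat.mul_le_mul_left n h8
      have h9 : l * B < l * n := by
        have ha : (a : ℕ) < n := a.2
        have : l * n = n * l := Nat.mul_comm l n
        omega
      exact Nat.lt_of_mul_lt_mul_left h9
    refine (if_pos hC).trans ?_
    symm
    rw [Fintype.sum_eq_single (⟨B, hBlt⟩ : Fin n)]
    · rw [if_pos]
      exact ⟨h5, hBeq⟩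
    · intro x hx
      rw [if_neg]
      rintro ⟨h1, h2⟩
      apply hx
      apply Fin.ext
      show (x : ℕ) = B
      omega
  · refine (if_neg hC).trans ?_
    symm
    apply Finset.sum_eq_zero
    intro b _
    rw [if_neg]
    rintro ⟨h1, h2⟩
    apply hC
    have h3 : l * (m * (a' : ℕ) + (j' : ℕ)) = l * (n * (j : ℕ) + (b : ℕ)) :=
      congrArg (l * ·) h2
    have e1 : l * (m * (a' : ℕ) + (j' : ℕ)) = m * l * (a' : ℕ) + l * (j' : ℕ) := by ring
    have e2 : l * (n * (j : ℕ) + (b : ℕ)) = n * (l * (j : ℕ)) + l * (b : ℕ) := by ring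
    have e3 : n * (l * (j : ℕ) + (k : ℕ)) = n * (l * (j : ℕ)) + n * (k : ℕ) := by ring
    omega
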